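/- Let V be a finite-dimensional real normed vector space and let {S_i}_{i ∈ I} be a finite nonempty collection of subsets of V. Then AC(⋃_{i ∈ I} S_i) ⊆ ⋃_{i ∈ I} AC(S_i). -/

import Mathlib

open Pointwise Bornology

/-- A subset `C` of a real vector space is a cone if `t • C = C` for every `t > 0`. -/
def IsCone {V : Type*} [NormedAddCommGroup V] [NormedSpace ℝ V] (C : Set V) : Prop :=
  ∀ t : ℝ, 0 < t → t • C = C

/-- The asymptotic cone of a subset `S`: the set of `ξ` such that every open cone
containing `ξ` meets `S` in an unbounded set, together with `0`. -/
def asymptoticCone' {V : Type*} [NormedAddCommGroup V] [NormedSpace ℝ V] (S : Set V) : Set V :=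
  {ξ : V | ∀ C : Set V, IsOpen C → IsCone C → ξ ∈ C → ¬ IsBounded (C ∩ S)} ∪ {0}

/-- The asymptotic cone of a finite union is contained in the union of the
asymptotic cones. -/
theorem asymptoticCone_iUnion_subset {V : Type*} [NormedAddCommGroup V] [NormedSpace ℝ V]
    [FiniteDimensional ℝ V] {I : Type*} [Finite I] [Nonempty I] (S : I → Set V) :
    asymptoticCone' (⋃ i, S i) ⊆ ⋃ i, asymptoticCone' (S i) := by
  intro ξ hξ
  by_contra h
  simp only [Set.mem_iUnion, not_exists] at h
  -- ξ ≠ 0 since 0 is in every asymptotic cone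
  have hne : ξ ≠ 0 := by
    intro h0
    exact h (Classical.arbitrary I) (Or.inr (by simp [h0]))
  have hξ' : ∀ C : Set V, IsOpen C → IsCone C → ξ ∈ C → ¬ IsBounded (C ∩ ⋃ i, S i) := by
    rcases hξ with h1 | h1
    · exact h1
    · exact absurd h1 hne
  -- for each i, choose an open cone C i with ξ ∈ C i and C i ∩ S i bounded
  have hch : ∀ i, ∃ C : Set V, IsOpen C ∧ IsCone C ∧ ξ ∈ C ∧ IsBounded (C ∩ S i) := by
    intro i
    have := h i
    simp only [asymptoticCone', Set.mem_union, Set.mem_setOf_eq, Set.mem_singleton_iff,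
      not_or] at this
    obtain ⟨h2, _⟩ := this
    push_neg at h2
    obtain ⟨C, hC1, hC2, hC3, hC4⟩ := h2
    exact ⟨C, hC1, hC2, hC3, hC4⟩
  choose C hCo hCc hCm hCb using hch
  set D : Set V := ⋂ i, C i with hD
  have hDo : IsOpen D := isOpen_iInter_of_finite hCo
  have hDc : IsCone D := by
    intro t ht
    apply Set.Subset.antisymm
    · rintro x ⟨y, hy, rfl⟩
      simp only [hD, Set.mem_iInter] at hy ⊢
      intro i
      rw [← hCc i t ht]
      exact ⟨y, hy i, rfl⟩
    · intro x hx
      refine ⟨t⁻¹ • x, ?_, by simp [smul_smul, mul_inv_cancel₀ ht.ne']⟩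
      simp only [hD, Set.mem_iInter] at hx ⊢
      intro i
      have : x ∈ t • C i := by rw [hCc i t ht]; exact hx i
      obtain ⟨z, hz, rfl⟩ := this
      rwa [smul_smul, inv_mul_cancel₀ ht.ne', one_smul]
  have hDm : ξ ∈ D := Set.mem_iInter.mpr hCm
  apply hξ' D hDo hDc hDm
  have : D ∩ ⋃ i, S i ⊆ ⋃ i, (C i ∩ S i) := by
    rintro x ⟨hxD, hxS⟩
    obtain ⟨i, hi⟩ := Set.mem_iUnion.mp hxS
    exact Set.mem_iUnion.mpr ⟨i, Set.mem_iInter.mp hxD i, hi⟩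
  exact ((isBounded_iUnion).mpr hCb).subset this
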